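/- arXiv:1606.08794 — 2 statements merged into one kernel-verified Lean document; each statement's English description precedes it below -/
import Mathlib

section
/- In a nilpotent differential graded Lie algebra L over ℚ, the gauge action of L_0 on Maurer-Cartan elements is well-defined: for x ∈ L_0 and z ∈ MC(L), the element x ∙ z = e^{ad_x}(z) - ((e^{ad_x} - 1)/ad_x)(dx) is again a Maurer-Cartan element. -/
namespace Paper

variable {L : Type*} [AddCommGroup L] [Module ℚ L]

/-- The axioms of a ℤ-graded differential graded Lie algebra over ℚ, on a ℚ-vector space `L`
with grading `deg`, bilinear bracket `bk` and differential `d` of degree `-1`: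
graded antisymmetry, graded Jacobi identity, graded Leibniz rule and `d ∘ d = 0`. -/
structure IsDGLA (deg : ℤ → Submodule ℚ L) (bk : L →ₗ[ℚ] L →ₗ[ℚ] L) (d : L →ₗ[ℚ] L) : Prop where
  bk_deg : ∀ (i j : ℤ) (x y : L), x ∈ deg i → y ∈ deg j → bk x y ∈ deg (i + j)
  antisymm : ∀ (i j : ℤ) (x y : L), x ∈ deg i → y ∈ deg j →
    bk x y = -(((-1 : ℚ) ^ (i * j)) • bk y x)
  jacobi : ∀ (i j : ℤ) (x y z : L), x ∈ deg i → y ∈ deg j →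
    bk x (bk y z) = bk (bk x y) z + ((-1 : ℚ) ^ (i * j)) • bk y (bk x z)
  d_deg : ∀ (i : ℤ) (x : L), x ∈ deg i → d x ∈ deg (i - 1)
  leibniz : ∀ (i : ℤ) (x y : L), x ∈ deg i →
    d (bk x y) = bk (d x) y + ((-1 : ℚ) ^ i) • bk x (d y)
  d_sq : ∀ x : L, d (d x) = 0
  deg_spans : (⨆ i : ℤ, deg i) = ⊤

/-- Iterated adjoint action: `adp bk x n z = ad_x^n (z)`. -/
def adp (bk : L →ₗ[ℚ] L →ₗ[ℚ] L) (x : L) (n : ℕ) (z : L) : L := (fun t => bk x t)^[n] z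

/-- A Maurer-Cartan element: `u` of degree `-1` with `d u = -½[u,u]`. -/
def IsMC (deg : ℤ → Submodule ℚ L) (bk : L →ₗ[ℚ] L →ₗ[ℚ] L) (d : L →ₗ[ℚ] L) (u : L) : Prop :=
  u ∈ deg (-1) ∧ d u = -((1 / 2 : ℚ) • bk u u)

section Aux

variable {deg : ℤ → Submodule ℚ L} {bk : L →ₗ[ℚ] L →ₗ[ℚ] L} {d : L →ₗ[ℚ] L}

lemma adp_succ (x : L) (n : ℕ) (y : L) : adp bk x (n + 1) y = bk x (adp bk x n y) :=
  Function.iterate_succ_apply' _ n y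

lemma adp_zero_right (x : L) (n : ℕ) : adp bk x n (0 : L) = 0 := by
  induction n with
  | zero => rfl
  | succ n ih => rw [adp_succ, ih, map_zero]

lemma adp_add (x : L) (m n : ℕ) (y : L) : adp bk x (m + n) y = adp bk x m (adp bk x n y) :=
  Function.iterate_add_apply _ m n y

lemma bk_symm (h : IsDGLA deg bk d) {u v : L} (hu : u ∈ deg (-1)) (hv : v ∈ deg (-1)) :
    bk u v = bk v u := by
  have := h.antisymm (-1) (-1) u v hu hv
  norm_num at this
  simpa using this

lemma jacobi0 (h : IsDGLA deg bk d) {x u : L} (hx : x ∈ deg 0) (hu : u ∈ deg (-1)) (v : L) :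
    bk x (bk u v) = bk (bk x u) v + bk u (bk x v) := by
  have := h.jacobi 0 (-1) x u v hx hu
  norm_num at this
  simpa using this

lemma leibniz0 (h : IsDGLA deg bk d) {x : L} (hx : x ∈ deg 0) (y : L) :
    d (bk x y) = bk (d x) y + bk x (d y) := by
  have := h.leibniz 0 x y hx
  norm_num at this
  simpa using this

lemma bk_deg_neg_one (h : IsDGLA deg bk d) {x u : L} (hx : x ∈ deg 0) (hu : u ∈ deg (-1)) :
    bk x u ∈ deg (-1) := by
  have := h.bk_deg 0 (-1) x u hx hu
  norm_num at this
  exact this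

lemma dx_deg (h : IsDGLA deg bk d) {x : L} (hx : x ∈ deg 0) : d x ∈ deg (-1) := by
  have := h.d_deg 0 x hx
  norm_num at this
  exact this

end Aux

def gA (bk : L →ₗ[ℚ] L →ₗ[ℚ] L) (d : L →ₗ[ℚ] L) (x z : L) : ℕ → L
  | 0 => z
  | (n+1) => ((n : ℚ) + 1)⁻¹ • (bk x (gA bk d x z n) - if n = 0 then d x else 0)

variable {bk : L →ₗ[ℚ] L →ₗ[ℚ] L} {d : L →ₗ[ℚ] L}

lemma gA_rec (x z : L) (n : ℕ) :
    ((n : ℚ) + 1) • gA bk d x z (n + 1)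
      = bk x (gA bk d x z n) - (if n = 0 then d x else 0) := by
  have hne : ((n : ℚ) + 1) ≠ 0 := by positivity
  rw [gA, smul_smul, mul_inv_cancel₀ hne, one_smul]

lemma gA_closed (x z : L) (n : ℕ) :
    gA bk d x z (n + 1)
      = (((n + 1).factorial : ℚ))⁻¹ • (adp bk x (n + 1) z - adp bk x n (d x)) := by
  induction n with
  | zero =>
      show ((0 : ℚ) + 1)⁻¹ • (bk x (gA bk d x z 0) - d x) = _
      simp [gA, adp, Nat.factorial]
  | succ n ih =>
      rw [show n + 1 + 1 = (n + 1) + 1 from rfl, gA]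
      simp only [Nat.succ_ne_zero, if_false, sub_zero]
      rw [ih, map_smul, map_sub, ← adp_succ, ← adp_succ, smul_smul]
      congr 1
      rw [Nat.factorial_succ (n + 1)]
      push_cast
      rw [mul_inv]

lemma gA_zero_of_nil (N : ℕ) (hnil : ∀ t y : L, adp bk t N y = 0) (x z : L)
    {n : ℕ} (hn : N ≤ n) : gA bk d x z (n + 1) = 0 := by
  obtain ⟨k, rfl⟩ := Nat.exists_eq_add_of_le hn
  have hz : ∀ (m : ℕ) (y : L), adp bk x (m + N) y = 0 := by
    intro m y
    rw [add_comm, adp, Function.iterate_add_apply, ← adp, ← adp, hnil]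
  rw [gA_closed]
  have h1 : N + k + 1 = (k + 1) + N := by ring
  have h2 : N + k = k + N := by ring
  rw [h1, h2, hz, hz, sub_zero, smul_zero]

lemma gA_sum (N : ℕ) (hnil : ∀ t y : L, adp bk t N y = 0) (x z : L) :
    ∑ n ∈ Finset.range (N + 1), gA bk d x z n
      = (∑ n ∈ Finset.range N, ((n.factorial : ℚ)⁻¹) • adp bk x n z) -
        ∑ n ∈ Finset.range N, (((n + 1).factorial : ℚ)⁻¹) • adp bk x n (d x) := by
  rw [Finset.sum_range_succ' (gA bk d x z) N]
  have : ∀ n ∈ Finset.range N, gA bk d x z (n + 1)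
      = ((((n+1).factorial : ℚ))⁻¹ • adp bk x (n + 1) z)
        - (((n+1).factorial : ℚ))⁻¹ • adp bk x n (d x) := by
    intro n _
    rw [gA_closed, smul_sub]
  rw [Finset.sum_congr rfl this, Finset.sum_sub_distrib]
  have hz : gA bk d x z 0 = z := rfl
  rw [hz]
  have hN : ∑ n ∈ Finset.range N, ((n.factorial : ℚ)⁻¹) • adp bk x n z
      = ∑ n ∈ Finset.range (N + 1), ((n.factorial : ℚ)⁻¹) • adp bk x n z := by
    rw [Finset.sum_range_succ, hnil, smul_zero, add_zero]
  rw [hN, Finset.sum_range_succ' (fun n => ((n.factorial : ℚ)⁻¹) • adp bk x n z) N]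
  simp [adp]
  abel

section Gauge

variable {deg : ℤ → Submodule ℚ L} {bk : L →ₗ[ℚ] L →ₗ[ℚ] L} {d : L →ₗ[ℚ] L}

lemma gA_deg (h : IsDGLA deg bk d) {x z : L} (hx : x ∈ deg 0) (hz : z ∈ deg (-1)) :
    ∀ n, gA bk d x z n ∈ deg (-1)
  | 0 => hz
  | (n+1) => by
      rw [gA]
      refine Submodule.smul_mem _ _ (Submodule.sub_mem _
        (bk_deg_neg_one h hx (gA_deg h hx hz n)) ?_)
      split_ifs
      · exact dx_deg h hx
      · exact Submodule.zero_mem _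

lemma key_rec (h : IsDGLA deg bk d) {x z : L} (hx : x ∈ deg 0) (hz : z ∈ deg (-1)) (n : ℕ) :
    ((n : ℚ) + 1) • (d (gA bk d x z (n+1)) + (2:ℚ)⁻¹ •
        ∑ p ∈ Finset.HasAntidiagonal.antidiagonal (n+1), bk (gA bk d x z p.1) (gA bk d x z p.2))
      = bk x (d (gA bk d x z n) + (2:ℚ)⁻¹ •
        ∑ p ∈ Finset.HasAntidiagonal.antidiagonal n, bk (gA bk d x z p.1) (gA bk d x z p.2)) := by
  set a := gA bk d x z with ha
  have hadeg : ∀ m, a m ∈ deg (-1) := gA_deg h hx hz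
  have hsym : ∀ i j, bk (a i) (a j) = bk (a j) (a i) := fun i j =>
    bk_symm h (hadeg i) (hadeg j)
  set S := ∑ p ∈ Finset.HasAntidiagonal.antidiagonal n, bk (bk x (a p.1)) (a p.2) with hS
  set T := bk (d x) (a n) with hT
  have e1 : ((n : ℚ) + 1) • d (a (n+1)) = T + bk x (d (a n)) := by
    rw [← map_smul, gA_rec, map_sub, leibniz0 h hx]
    have hd : d (if n = 0 then d x else 0) = 0 := by
      split_ifs
      · exact h.d_sq x
      · exact map_zero d
    rw [hd, sub_zero]
  have e2 : ((n : ℚ) + 1) • (∑ p ∈ Finset.HasAntidiagonal.antidiagonal (n+1), bk (a p.1) (a p.2))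
      = (S - T) + (S - T) := by
    have stepA : ((n : ℚ) + 1) • (∑ p ∈ Finset.HasAntidiagonal.antidiagonal (n+1), bk (a p.1) (a p.2))
        = (∑ p ∈ Finset.HasAntidiagonal.antidiagonal (n+1), (p.1 : ℚ) • bk (a p.1) (a p.2))
          + ∑ p ∈ Finset.HasAntidiagonal.antidiagonal (n+1), (p.2 : ℚ) • bk (a p.1) (a p.2) := by
      rw [Finset.smul_sum, ← Finset.sum_add_distrib]
      refine Finset.sum_congr rfl fun p hp => ?_
      have hpn : p.1 + p.2 = n + 1 := Finset.HasAntidiagonal.mem_antidiagonal.mp hp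
      have hq : ((n : ℚ) + 1) = (p.1 : ℚ) + (p.2 : ℚ) := by exact_mod_cast hpn.symm
      rw [← add_smul, hq]
    have stepB : ∑ p ∈ Finset.HasAntidiagonal.antidiagonal (n+1), (p.2 : ℚ) • bk (a p.1) (a p.2)
        = ∑ p ∈ Finset.HasAntidiagonal.antidiagonal (n+1), (p.1 : ℚ) • bk (a p.1) (a p.2) := by
      calc ∑ p ∈ Finset.HasAntidiagonal.antidiagonal (n+1), (p.2 : ℚ) • bk (a p.1) (a p.2)
          = ∑ p ∈ Finset.HasAntidiagonal.antidiagonal (n+1), (p.2 : ℚ) • bk (a p.2) (a p.1) := by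
            exact Finset.sum_congr rfl fun p _ => by rw [hsym]
        _ = ∑ p ∈ Finset.HasAntidiagonal.antidiagonal (n+1), (p.1 : ℚ) • bk (a p.1) (a p.2) :=
            Finset.Nat.sum_antidiagonal_swap (f := fun p => (p.1 : ℚ) • bk (a p.1) (a p.2))
    have stepC : ∑ p ∈ Finset.HasAntidiagonal.antidiagonal (n+1), (p.1 : ℚ) • bk (a p.1) (a p.2)
        = S - T := by
      rw [Finset.Nat.sum_antidiagonal_succ (f := fun p => (p.1 : ℚ) • bk (a p.1) (a p.2))]
      simp only [Nat.cast_zero, zero_smul, zero_add]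
      have hterm : ∀ p ∈ Finset.HasAntidiagonal.antidiagonal n,
          ((p.1 + 1 : ℕ) : ℚ) • bk (a (p.1 + 1)) (a p.2)
            = bk (bk x (a p.1)) (a p.2) - (if p.1 = 0 then bk (d x) (a p.2) else 0) := by
        intro p _
        rw [show ((p.1 + 1 : ℕ) : ℚ) = (p.1 : ℚ) + 1 by push_cast; ring]
        rw [← LinearMap.smul_apply, ← map_smul, gA_rec, map_sub, LinearMap.sub_apply]
        congr 1
        split_ifs with h0
        · rfl
        · rw [map_zero, LinearMap.zero_apply]
      rw [Finset.sum_congr rfl hterm, Finset.sum_sub_distrib]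
      congr 1
      refine Finset.sum_eq_single_of_mem (0, n)
        (Finset.HasAntidiagonal.mem_antidiagonal.mpr (by simp)) ?_ |>.trans (if_pos rfl)
      intro p hp hne
      have hpn : p.1 + p.2 = n := Finset.HasAntidiagonal.mem_antidiagonal.mp hp
      rw [if_neg]
      intro h0
      exact hne (Prod.ext h0 (by omega))
    rw [stepA, stepB, stepC]
  have e3 : bk x (∑ p ∈ Finset.HasAntidiagonal.antidiagonal n, bk (a p.1) (a p.2)) = S + S := by
    rw [map_sum]
    have hterm : ∀ p ∈ Finset.HasAntidiagonal.antidiagonal n, bk x (bk (a p.1) (a p.2))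
        = bk (bk x (a p.1)) (a p.2) + bk (bk x (a p.2)) (a p.1) := by
      intro p _
      rw [jacobi0 h hx (hadeg p.1)]
      congr 1
      exact bk_symm h (hadeg p.1) (bk_deg_neg_one h hx (hadeg p.2))
    rw [Finset.sum_congr rfl hterm, Finset.sum_add_distrib]
    congr 1
    exact Finset.Nat.sum_antidiagonal_swap (f := fun p => bk (bk x (a p.1)) (a p.2))
  have half : ∀ y : L, (2:ℚ)⁻¹ • (y + y) = y := fun y => by
    rw [← two_smul ℚ y, smul_smul]
    norm_num
  rw [smul_add, e1, smul_smul, mul_comm, ← smul_smul, e2, half, map_add, map_smul, e3, half]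
  abel

end Gauge




/-- In a nilpotent differential graded Lie algebra `L` over ℚ (here
nilpotency is expressed by `ad_t^N = 0` for every `t`, so that the exponential series
are the finite sums below), the gauge action of `L₀` on Maurer-Cartan elements is
well-defined: for `x ∈ L₀` and `z ∈ MC(L)`, the element
`x ∙ z = e^{ad_x}(z) - ((e^{ad_x} - 1)/ad_x)(dx)`
 `= Σ_{n<N} (1/n!) ad_x^n(z) - Σ_{n<N} (1/(n+1)!) ad_x^n(dx)`
is again a Maurer-Cartan element. -/
theorem gauge_action_well_defined
    {L : Type*} [AddCommGroup L] [Module ℚ L]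
    (deg : ℤ → Submodule ℚ L) (bk : L →ₗ[ℚ] L →ₗ[ℚ] L) (d : L →ₗ[ℚ] L)
    (h : IsDGLA deg bk d)
    (N : ℕ) (hnil : ∀ t y : L, adp bk t N y = 0)
    (x : L) (hx : x ∈ deg 0) (z : L) (hz : IsMC deg bk d z) :
    IsMC deg bk d
      ((∑ n ∈ Finset.range N, ((n.factorial : ℚ)⁻¹) • adp bk x n z) -
        ∑ n ∈ Finset.range N, (((n + 1).factorial : ℚ)⁻¹) • adp bk x n (d x)) := by
  have hz1 : z ∈ deg (-1) := hz.1
  have hadeg : ∀ m, gA bk d x z m ∈ deg (-1) := gA_deg h hx hz1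
  -- the curvature vanishes degreewise
  have hc : ∀ n, d (gA bk d x z n) + (2:ℚ)⁻¹ •
      ∑ p ∈ Finset.HasAntidiagonal.antidiagonal n, bk (gA bk d x z p.1) (gA bk d x z p.2) = 0 := by
    intro n
    induction n with
    | zero =>
        have hB0 : ∑ p ∈ Finset.HasAntidiagonal.antidiagonal 0, bk (gA bk d x z p.1) (gA bk d x z p.2)
            = bk z z := by simp [show gA bk d x z 0 = z from rfl]
        have ha0 : gA bk d x z 0 = z := rfl
        rw [hB0, ha0, hz.2]
        rw [show (1/2 : ℚ) = (2:ℚ)⁻¹ by norm_num]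
        abel
    | succ n ih =>
        have hk := key_rec h hx hz1 n
        rw [ih, map_zero] at hk
        have hne : ((n : ℚ) + 1) ≠ 0 := by positivity
        exact (smul_eq_zero.mp hk).resolve_left hne
  have hda : ∀ n, d (gA bk d x z n) = -((2:ℚ)⁻¹ •
      ∑ p ∈ Finset.HasAntidiagonal.antidiagonal n, bk (gA bk d x z p.1) (gA bk d x z p.2)) :=
    fun n => eq_neg_of_add_eq_zero_left (hc n)
  rw [← gA_sum N hnil x z]
  constructor
  · exact Submodule.sum_mem _ fun n _ => hadeg n
  · -- main MC equation
    have hvan : ∀ m, N + 1 ≤ m → gA bk d x z m = 0 := by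
      intro m hm
      obtain ⟨k, rfl⟩ := Nat.exists_eq_add_of_le hm
      rw [show N + 1 + k = (N + k) + 1 by ring]
      exact gA_zero_of_nil N hnil x z (Nat.le_add_right N k)
    have hwM : ∑ n ∈ Finset.range (N+1), gA bk d x z n
        = ∑ n ∈ Finset.range (2*N+2), gA bk d x z n := by
      refine Finset.sum_subset (Finset.range_subset_range.mpr (by omega)) ?_
      intro m hm hms
      exact hvan m (by simp only [Finset.mem_range] at hms; omega)
    have hdisj : (↑(Finset.range (2*N+2)) : Set ℕ).PairwiseDisjoint
        (fun n : ℕ => Finset.HasAntidiagonal.antidiagonal n) := by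
      intro i _ j _ hij
      simp only [Finset.disjoint_left]
      intro p hpi hpj
      rw [Finset.HasAntidiagonal.mem_antidiagonal] at hpi hpj
      exact hij (hpi ▸ hpj)
    have hBB : ∑ n ∈ Finset.range (2*N+2),
        ∑ p ∈ Finset.HasAntidiagonal.antidiagonal n, bk (gA bk d x z p.1) (gA bk d x z p.2)
        = bk (∑ n ∈ Finset.range (N+1), gA bk d x z n)
            (∑ n ∈ Finset.range (N+1), gA bk d x z n) := by
      rw [← Finset.sum_biUnion hdisj]
      have hsub : Finset.range (N+1) ×ˢ Finset.range (N+1)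
          ⊆ (Finset.range (2*N+2)).biUnion (fun n => Finset.HasAntidiagonal.antidiagonal n) := by
        intro p hp
        rw [Finset.mem_product, Finset.mem_range, Finset.mem_range] at hp
        exact Finset.mem_biUnion.mpr ⟨p.1 + p.2, Finset.mem_range.mpr (by omega),
          Finset.HasAntidiagonal.mem_antidiagonal.mpr rfl⟩
      rw [← Finset.sum_subset hsub ?van]
      case van =>
        intro p hp hps
        rw [Finset.mem_product, Finset.mem_range, Finset.mem_range] at hps
        push_neg at hps
        by_cases h1 : N + 1 ≤ p.1
        · rw [hvan p.1 h1, map_zero, LinearMap.zero_apply]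
        · rw [hvan p.2 (hps (by omega)), map_zero]
      rw [Finset.sum_product, map_sum bk _ (Finset.range (N+1)), LinearMap.sum_apply]
      exact Finset.sum_congr rfl fun i _ => (map_sum (bk (gA bk d x z i)) _ _).symm
    calc d (∑ n ∈ Finset.range (N+1), gA bk d x z n)
        = ∑ n ∈ Finset.range (2*N+2), d (gA bk d x z n) := by rw [hwM, map_sum]
      _ = -((2:ℚ)⁻¹ • ∑ n ∈ Finset.range (2*N+2),
            ∑ p ∈ Finset.HasAntidiagonal.antidiagonal n, bk (gA bk d x z p.1) (gA bk d x z p.2)) := by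
          rw [Finset.sum_congr rfl fun n _ => hda n, Finset.sum_neg_distrib, Finset.smul_sum]
      _ = _ := by
          rw [hBB]
          norm_num


end Paper
end

section
/- Let a be a degree -1 Maurer-Cartan element and define, in the ideal generated by elements v of degree ≥ 0 (with d₁v = -[a,v]) and w (with d₁w = 0), the operators on elements a^r ⊠ v := ad_a^r(v): the linear differential satisfies d₁(a^r ⊠ v) = -a^{r+1} ⊠ v if r is even and 0 if r is odd; consequently the derivation θ = -ad_a - d₁ satisfies θ(a^r ⊠ v) = 0 if r even, -a^{r+1} ⊠ v if r odd, and θ² = 0 on these elements. -/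
namespace Paper

variable {L : Type*} [AddCommGroup L] [Module ℚ L]

/-- Let `a` be a degree `-1` Maurer-Cartan element, `v` a homogeneous
element of degree `≥ 0` with (linear-level differential) `d₁ v = -[a,v]`, and `w` a
homogeneous element of degree `≥ 0` with `d₁ w = 0`.  Writing `a^r ⊠ v = ad_a^r(v)`,
the differential satisfies `d₁(a^r ⊠ v) = -a^{r+1} ⊠ v` for `r` even and `0` for `r`
odd (and dually for `w`); consequently the derivation `θ = -ad_a - d₁` satisfies
`θ(a^r ⊠ v) = 0` for `r` even and `-a^{r+1} ⊠ v` for `r` odd (dually for `w`),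
and `θ² = 0` on these elements. -/
theorem theta_computation
    {L : Type*} [AddCommGroup L] [Module ℚ L]
    (deg : ℤ → Submodule ℚ L) (bk : L →ₗ[ℚ] L →ₗ[ℚ] L) (d : L →ₗ[ℚ] L)
    (h : IsDGLA deg bk d) (a : L) (ha : IsMC deg bk d a)
    (v w : L) (nv nw : ℤ) (hnv : 0 ≤ nv) (hnw : 0 ≤ nw)
    (hv : v ∈ deg nv) (hw : w ∈ deg nw)
    (hdv : d v = -(bk a v)) (hdw : d w = 0) :
    (∀ r : ℕ, (Even r → d (adp bk a r v) = -(adp bk a (r + 1) v)) ∧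
        (Odd r → d (adp bk a r v) = 0)) ∧
    (∀ r : ℕ, (Even r → d (adp bk a r w) = 0) ∧
        (Odd r → d (adp bk a r w) = -(adp bk a (r + 1) w))) ∧
    (∀ r : ℕ, (Even r → -(bk a (adp bk a r v)) - d (adp bk a r v) = 0) ∧
        (Odd r → -(bk a (adp bk a r v)) - d (adp bk a r v) = -(adp bk a (r + 1) v))) ∧
    (∀ r : ℕ, (Even r → -(bk a (adp bk a r w)) - d (adp bk a r w) = -(adp bk a (r + 1) w)) ∧
        (Odd r → -(bk a (adp bk a r w)) - d (adp bk a r w) = 0)) ∧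
    (∀ r : ℕ, ∀ z : L, (z = adp bk a r v ∨ z = adp bk a r w) →
        -(bk a (-(bk a z) - d z)) - d (-(bk a z) - d z) = 0) := by
  obtain ⟨haDeg, haMC⟩ := ha
  have adp_succ : ∀ (n : ℕ) (z : L), adp bk a (n + 1) z = bk a (adp bk a n z) := by
    intro n z
    simp [adp, Function.iterate_succ_apply']
  have adp_zero : ∀ z : L, adp bk a 0 z = z := fun z => rfl
  -- key : d (bk a t) = -(bk a (bk a t)) - bk a (d t)
  have key : ∀ t : L, d (bk a t) = -(bk a (bk a t)) - bk a (d t) := by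
    intro t
    have hjac := h.jacobi (-1) (-1) a a t haDeg haDeg
    have hpow : ((-1 : ℚ) ^ ((-1 : ℤ) * (-1 : ℤ))) = -1 := by norm_num
    rw [hpow] at hjac
    have hbkaa : bk (bk a a) t = (2 : ℚ) • bk a (bk a t) := by
      linear_combination (norm := module) -hjac
    have hleib := h.leibniz (-1) a t haDeg
    have hpow2 : ((-1 : ℚ) ^ (-1 : ℤ)) = -1 := by norm_num
    rw [hpow2, haMC] at hleib
    rw [hleib]
    rw [map_neg, map_smul, LinearMap.neg_apply, LinearMap.smul_apply, hbkaa]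
    module
  have hAv : ∀ r : ℕ, (Even r → d (adp bk a r v) = -(adp bk a (r + 1) v)) ∧
      (Odd r → d (adp bk a r v) = 0) := by
    intro r
    induction r with
    | zero =>
      refine ⟨fun _ => ?_, fun hodd => absurd hodd (by simp)⟩
      rw [adp_zero, adp_succ, adp_zero, hdv]
    | succ n ih =>
      constructor
      · intro he
        have hn : Odd n := Nat.not_even_iff_odd.mp (Nat.even_add_one.mp he)
        rw [adp_succ, key, ih.2 hn, map_zero, adp_succ, adp_succ]
        abel
      · intro ho
        have hn : Even n := by
          rcases Nat.even_or_odd n with h' | h'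
          · exact h'
          · exact absurd (Odd.add_one h') (by simpa using ho)
        rw [adp_succ, key, ih.1 hn, map_neg, adp_succ]
        abel
  have hBw : ∀ r : ℕ, (Even r → d (adp bk a r w) = 0) ∧
      (Odd r → d (adp bk a r w) = -(adp bk a (r + 1) w)) := by
    intro r
    induction r with
    | zero =>
      refine ⟨fun _ => ?_, fun hodd => absurd hodd (by simp)⟩
      rw [adp_zero, hdw]
    | succ n ih =>
      constructor
      · intro he
        have hn : Odd n := Nat.not_even_iff_odd.mp (Nat.even_add_one.mp he)
        rw [adp_succ, key, ih.2 hn, map_neg, adp_succ]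
        abel
      · intro ho
        have hn : Even n := by
          rcases Nat.even_or_odd n with h' | h'
          · exact h'
          · exact absurd (Odd.add_one h') (by simpa using ho)
        rw [adp_succ, key, ih.1 hn, map_zero, adp_succ, adp_succ]
        abel
  have hθv : ∀ r : ℕ, (Even r → -(bk a (adp bk a r v)) - d (adp bk a r v) = 0) ∧
      (Odd r → -(bk a (adp bk a r v)) - d (adp bk a r v) = -(adp bk a (r + 1) v)) := by
    intro r
    refine ⟨fun he => ?_, fun ho => ?_⟩
    · rw [(hAv r).1 he, adp_succ]; abel
    · rw [(hAv r).2 ho, adp_succ]; abel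
  have hθw : ∀ r : ℕ, (Even r → -(bk a (adp bk a r w)) - d (adp bk a r w) = -(adp bk a (r + 1) w)) ∧
      (Odd r → -(bk a (adp bk a r w)) - d (adp bk a r w) = 0) := by
    intro r
    refine ⟨fun he => ?_, fun ho => ?_⟩
    · rw [(hBw r).1 he, adp_succ]; abel
    · rw [(hBw r).2 ho, adp_succ]; abel
  refine ⟨hAv, hBw, hθv, hθw, ?_⟩
  intro r z hz
  rcases hz with rfl | rfl
  · rcases Nat.even_or_odd r with he | ho
    · rw [(hθv r).1 he]; simp
    · rw [(hθv r).2 ho]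
      have he' : Even (r + 1) := Odd.add_one ho
      have := (hθv (r + 1)).1 he'
      rw [map_neg, map_neg]
      have : bk a (adp bk a (r + 1) v) + d (adp bk a (r + 1) v) = 0 := by
        have h2 := (hθv (r + 1)).1 he'
        linear_combination (norm := abel) -h2
      linear_combination (norm := abel) this
  · rcases Nat.even_or_odd r with he | ho
    · rw [(hθw r).1 he]
      have ho' : Odd (r + 1) := Even.add_one he
      rw [map_neg, map_neg]
      have h2 : bk a (adp bk a (r + 1) w) + d (adp bk a (r + 1) w) = 0 := by
        have h3 := (hθw (r + 1)).2 ho'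
        linear_combination (norm := abel) -h3
      linear_combination (norm := abel) h2
    · rw [(hθw r).2 ho]; simp

end Paper
end
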